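/- Let B₃, B₂, B₁, B₀ be polynomials, D = t·d/dt, and suppose B(t) satisfies Σᵢ Bᵢ(t) Dⁱ B = 0 on a domain where w = 1 + αt ≠ 0. Set C(t) = w·B(t). Then Σᵢ Aᵢ(t) Dⁱ C = 0, where A₃ = w³B₃, A₂ = w²(−3αt B₃ + w B₂), A₁ = w(−3αt(1−αt)B₃ − 2αt w B₂ + w² B₁), and A₀ = −αt(1 − 4αt + α²t²)B₃ − αt w(1−αt)B₂ − αt w² B₁ + w³ B₀. -/

import Mathlib

open Polynomial

/-- multiplication by `w = 1 + αt` transforms the third-order Euler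
operator `Σ Bᵢ Dⁱ` into the operator with coefficients `Aᵢ` annihilating `C = wB`. -/
theorem stmt15 (α : ℝ) (B₃ B₂ B₁ B₀ : Polynomial ℝ)
    (D : (ℝ → ℝ) → (ℝ → ℝ)) (hD : ∀ f t, D f t = t * deriv f t)
    (B : ℝ → ℝ) (hB : ContDiff ℝ 3 B)
    (S : Set ℝ) (hS : IsOpen S) (hSw : ∀ t ∈ S, 1 + α * t ≠ 0)
    (hsol : ∀ t ∈ S,
      B₃.eval t * D (D (D B)) t + B₂.eval t * D (D B) t
        + B₁.eval t * D B t + B₀.eval t * B t = 0)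
    (Cf : ℝ → ℝ) (hCf : ∀ t, Cf t = (1 + α * t) * B t) :
    ∀ t ∈ S,
      let w : ℝ := 1 + α * t
      (w ^ 3 * B₃.eval t) * D (D (D Cf)) t
        + (w ^ 2 * (-(3 * α * t) * B₃.eval t + w * B₂.eval t)) * D (D Cf) t
        + (w * (-(3 * α * t) * (1 - α * t) * B₃.eval t - 2 * α * t * w * B₂.eval t
            + w ^ 2 * B₁.eval t)) * D Cf t
        + (-(α * t) * (1 - 4 * α * t + α ^ 2 * t ^ 2) * B₃.eval t
            - α * t * w * (1 - α * t) * B₂.eval t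
            - α * t * w ^ 2 * B₁.eval t + w ^ 3 * B₀.eval t) * Cf t = 0 := by
  -- differentiability of B and its derivatives
  have hB3 : ContDiff ℝ (2 + 1) B := by norm_num; exact hB
  have hB2 : ContDiff ℝ (1 + 1) (deriv B) := by
    have := (contDiff_succ_iff_deriv.mp hB3).2.2; norm_num at this ⊢; exact this
  have hB1 : ContDiff ℝ (0 + 1) (deriv (deriv B)) := by
    have := (contDiff_succ_iff_deriv.mp hB2).2.2; norm_num at this ⊢; exact this
  set b1 := deriv B with hb1
  set b2 := deriv b1 with hb2
  set b3 := deriv b2 with hb3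
  have hd1 : ∀ s, HasDerivAt B (b1 s) s := fun s =>
    ((contDiff_succ_iff_deriv.mp hB3).1 s).hasDerivAt
  have hd2 : ∀ s, HasDerivAt b1 (b2 s) s := fun s =>
    ((contDiff_succ_iff_deriv.mp hB2).1 s).hasDerivAt
  have hd3 : ∀ s, HasDerivAt b2 (b3 s) s := fun s =>
    ((contDiff_succ_iff_deriv.mp hB1).1 s).hasDerivAt
  -- the B side
  set e1 : ℝ → ℝ := fun s => s * b1 s with he1def
  have he1 : D B = e1 := funext fun s => by rw [hD]
  have he1d : ∀ s, HasDerivAt e1 (b1 s + s * b2 s) s := fun s => by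
    have h := (hasDerivAt_id s).mul (hd2 s)
    refine h.congr_deriv ?_; simp only [id_eq, Pi.add_apply, Pi.mul_apply]; ring
  set e2 : ℝ → ℝ := fun s => s * (b1 s + s * b2 s) with he2def
  have he2 : D (D B) = e2 := funext fun s => by
    rw [hD, he1, (he1d s).deriv]
  have he2d : ∀ s, HasDerivAt e2 (b1 s + 3 * s * b2 s + s ^ 2 * b3 s) s := fun s => by
    have h := (hasDerivAt_id s).mul ((hd2 s).add ((hasDerivAt_id s).mul (hd3 s)))
    refine h.congr_deriv ?_; simp only [id_eq, Pi.add_apply, Pi.mul_apply]; ring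
  -- the Cf side
  set f0 : ℝ → ℝ := fun s => (1 + α * s) * B s with hf0def
  have hCfe : Cf = f0 := funext hCf
  have hf0d : ∀ s, HasDerivAt f0 (α * B s + (1 + α * s) * b1 s) s := fun s => by
    have h := (((hasDerivAt_const s (1:ℝ)).add ((hasDerivAt_id s).const_mul α)).mul (hd1 s))
    refine h.congr_deriv ?_; simp only [id_eq, Pi.add_apply, Pi.mul_apply]; ring
  set f1 : ℝ → ℝ := fun s => s * (α * B s + (1 + α * s) * b1 s) with hf1def
  have hf1 : D Cf = f1 := funext fun s => by
    rw [hD, hCfe, (hf0d s).deriv]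
  have hf1d : ∀ s, HasDerivAt f1
      (α * B s + (1 + 3 * α * s) * b1 s + (s + α * s ^ 2) * b2 s) s := fun s => by
    have h := (hasDerivAt_id s).mul (((hd1 s).const_mul α).add
      (((hasDerivAt_const s (1:ℝ)).add ((hasDerivAt_id s).const_mul α)).mul (hd2 s)))
    refine h.congr_deriv ?_; simp only [id_eq, Pi.add_apply, Pi.mul_apply]; ring
  set f2 : ℝ → ℝ := fun s =>
      s * (α * B s + (1 + 3 * α * s) * b1 s + (s + α * s ^ 2) * b2 s) with hf2def
  have hf2 : D (D Cf) = f2 := funext fun s => by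
    rw [hD, hf1, (hf1d s).deriv]
  have hf2d : ∀ s, HasDerivAt f2
      (α * B s + (1 + 7 * α * s) * b1 s + (3 * s + 6 * α * s ^ 2) * b2 s
        + (s ^ 2 + α * s ^ 3) * b3 s) s := fun s => by
    have h := (hasDerivAt_id s).mul ((((hd1 s).const_mul α).add
        (((hasDerivAt_const s (1:ℝ)).add ((hasDerivAt_id s).const_mul (3 * α))).mul (hd2 s))).add
      (((hasDerivAt_id s).add ((hasDerivAt_pow 2 s).const_mul α)).mul (hd3 s)))
    refine h.congr_deriv ?_; simp only [id_eq, Pi.add_apply, Pi.mul_apply]; push_cast; ring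
  intro t ht
  intro w
  have hD3C : D (D (D Cf)) t
      = t * (α * B t + (1 + 7 * α * t) * b1 t + (3 * t + 6 * α * t ^ 2) * b2 t
        + (t ^ 2 + α * t ^ 3) * b3 t) := by
    rw [hD, hf2, (hf2d t).deriv]
  have hD3B : D (D (D B)) t = t * (b1 t + 3 * t * b2 t + t ^ 2 * b3 t) := by
    rw [hD, he2, (he2d t).deriv]
  have hs := hsol t ht
  rw [hD3B, he2, hf2, hf1, he1, hCfe] at *
  rw [hD3C]
  simp only [hf1def, hf2def, he1def, he2def, hf0def] at *
  linear_combination ((1 + α * t) ^ 4) * hs
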